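/- Define the potential Φ by Φ(⟨⟩) = 0 and Φ(⟨t,a,u⟩) = Φ(t) + p(t,u) + Φ(u), where p(t,u) = max(log_β(β·s(u)/(s(t)+s(u))), 0), β = φ^(φ+2), and φ = (√5+1)/2 is the golden ratio. Then for all weight-biased leftist heaps x and y, the amortized cost of union satisfies A(x,y) = T(x,y) + Φ(x∪y) − Φ(x) − Φ(y) ≤ log_φ(s(x)+s(y)), and for every nonempty weight-biased leftist heap x = ⟨t,a,u⟩ the amortized cost of delete-min satisfies T(t,u) + Φ(t∪u) − Φ(x) ≤ log_φ s(x). -/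

import Mathlib

inductive BTree (α : Type) : Type
  | nil : BTree α
  | node : BTree α → α → BTree α → BTree α

namespace BTree

variable {α : Type} [LinearOrder α]

/-- number of nodes -/
def size : BTree α → ℕ
  | nil => 0
  | node t _ u => size t + size u + 1

/-- size plus one -/
def s (x : BTree α) : ℕ := size x + 1

def rank : BTree α → ℕ
  | nil => 0
  | node _ _ u => rank u + 1

/-- minor rank -/
def prank : BTree α → ℕ
  | nil => 0
  | node t _ _ => rank t + 1

/-- `a` is less than or equal to every label of the tree -/
def LeAll (a : α) : BTree α → Prop
  | nil => True
  | node t b u => a ≤ b ∧ LeAll a t ∧ LeAll a u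

/-- heap property: every node's label is ≤ all labels in its subtrees -/
def IsHeap : BTree α → Prop
  | nil => True
  | node t a u => LeAll a t ∧ LeAll a u ∧ IsHeap t ∧ IsHeap u

/-- rank-biased leftist property -/
def RankLeftist : BTree α → Prop
  | nil => True
  | node t _ u => rank u ≤ rank t ∧ RankLeftist t ∧ RankLeftist u

/-- weight-biased leftist property -/
def WeightLeftist : BTree α → Prop
  | nil => True
  | node t _ u => size u ≤ size t ∧ WeightLeftist t ∧ WeightLeftist u

/-- rank-biased balancing -/
def balR : BTree α → BTree α
  | nil => nil
  | node t a u => if rank u < rank t then node t a u else node u a t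

/-- weight-biased balancing -/
def balW : BTree α → BTree α
  | nil => nil
  | node t a u => if size u < size t then node t a u else node u a t

/-- rank-biased merge -/
def mergeR : BTree α → BTree α → BTree α
  | nil, nil => nil
  | nil, node v b w => balR (node v b (mergeR nil w))
  | node t a u, nil => balR (node t a (mergeR u nil))
  | node t a u, node v b w =>
      if a ≤ b then balR (node t a (mergeR u (node v b w)))
      else balR (node v b (mergeR (node t a u) w))
termination_by x y => rank x + rank y
decreasing_by all_goals simp [rank]

/-- weight-biased merge -/
def mergeW : BTree α → BTree α → BTree α
  | nil, nil => nil
  | nil, node v b w => balW (node v b (mergeW nil w))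
  | node t a u, nil => balW (node t a (mergeW u nil))
  | node t a u, node v b w =>
      if a ≤ b then balW (node t a (mergeW u (node v b w)))
      else balW (node v b (mergeW (node t a u) w))
termination_by x y => rank x + rank y
decreasing_by all_goals simp [rank]

/-- number of comparisons used when merging (independent of the balancing strategy) -/
def cost : BTree α → BTree α → ℕ
  | nil, nil => 0
  | nil, node _ _ w => cost nil w + 1
  | node _ _ u, nil => cost u nil + 1
  | node t a u, node v b w =>
      (if a ≤ b then cost u (node v b w) else cost (node t a u) w) + 1
termination_by x y => rank x + rank y
decreasing_by all_goals simp [rank]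

end BTree

/-- the golden ratio φ = (√5 + 1)/2 -/
noncomputable def goldPhi : ℝ := (Real.sqrt 5 + 1) / 2

/-- β = φ^(φ+2) -/
noncomputable def goldBeta : ℝ := goldPhi ^ (goldPhi + 2)

/-- α = φ^(2φ-1) -/
noncomputable def goldAlpha : ℝ := goldPhi ^ (2 * goldPhi - 1)

namespace BTree

variable {α : Type} [LinearOrder α]

/-- p(t,u) = max(log_β (β·s(u)/(s(t)+s(u))), 0) -/
noncomputable def p (t u : BTree α) : ℝ :=
  max (Real.logb goldBeta (goldBeta * (s u : ℝ) / ((s t : ℝ) + (s u : ℝ)))) 0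

/-- the potential function Φ(⟨⟩) = 0, Φ(⟨t,a,u⟩) = Φ(t) + p(t,u) + Φ(u) -/
noncomputable def Phi : BTree α → ℝ
  | nil => 0
  | node t _ u => Phi t + p t u + Phi u

end BTree

section AuxGold

lemma goldPhi_eq_goldenRatio : goldPhi = Real.goldenRatio := by
  rw [goldPhi, Real.goldenRatio]; ring

lemma phi_pos : (0:ℝ) < goldPhi := goldPhi_eq_goldenRatio ▸ Real.goldenRatio_pos
lemma one_lt_phi : (1:ℝ) < goldPhi := goldPhi_eq_goldenRatio ▸ Real.one_lt_goldenRatio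
lemma phi_sq : goldPhi ^ 2 = goldPhi + 1 := by rw [goldPhi_eq_goldenRatio]; exact Real.goldenRatio_sq
lemma phi_ne_zero : goldPhi ≠ 0 := ne_of_gt phi_pos

lemma beta_pos : (0:ℝ) < goldBeta := Real.rpow_pos_of_pos phi_pos _
lemma one_lt_beta : (1:ℝ) < goldBeta := by
  rw [goldBeta]
  exact (Real.one_lt_rpow_iff_of_pos phi_pos).mpr (Or.inl ⟨one_lt_phi, by linarith [phi_pos]⟩)
lemma log_beta : Real.log goldBeta = (goldPhi + 2) * Real.log goldPhi := Real.log_rpow phi_pos _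

lemma logb_phi_eq (z : ℝ) : Real.logb goldPhi z = (goldPhi + 2) * Real.logb goldBeta z := by
  have h1 : Real.log goldPhi ≠ 0 := ne_of_gt (Real.log_pos one_lt_phi)
  have h2 : goldPhi + 2 ≠ 0 := by have := phi_pos; intro h; linarith
  rw [Real.logb, Real.logb, log_beta]
  field_simp

lemma logb_mono {x y : ℝ} (hx : 0 < x) (hxy : x ≤ y) :
    Real.logb goldBeta x ≤ Real.logb goldBeta y :=
  Real.logb_le_logb_of_le one_lt_beta hx hxy

lemma key_ineq {r : ℝ} (h0 : 0 < r) (h1 : r < 1) :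
    goldBeta * r * (1 - r) ^ goldPhi ≤ 1 := by
  have hφ := phi_pos
  have hr1 : (0:ℝ) < 1 - r := by linarith
  have hw : (goldPhi ^ 2)⁻¹ + goldPhi⁻¹ = 1 := by
    have h := phi_sq
    field_simp
    nlinarith [phi_sq]
  have H := Real.geom_mean_le_arith_mean2_weighted
      (by positivity : (0:ℝ) ≤ (goldPhi ^ 2)⁻¹) (by positivity : (0:ℝ) ≤ goldPhi⁻¹)
      (by positivity : (0:ℝ) ≤ goldPhi ^ 2 * r) (by positivity : (0:ℝ) ≤ goldPhi * (1 - r)) hw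
  have hsum : (goldPhi ^ 2)⁻¹ * (goldPhi ^ 2 * r) + goldPhi⁻¹ * (goldPhi * (1 - r)) = 1 := by
    field_simp
    ring
  rw [hsum] at H
  have H2 : ((goldPhi ^ 2 * r) ^ ((goldPhi ^ 2)⁻¹) * (goldPhi * (1 - r)) ^ (goldPhi⁻¹))
      ^ (goldPhi ^ 2 : ℝ) ≤ 1 := Real.rpow_le_one (by positivity) H (by positivity)
  rw [Real.mul_rpow (by positivity) (by positivity), ← Real.rpow_mul (by positivity),
    ← Real.rpow_mul (by positivity), inv_mul_cancel₀ (by positivity : (0:ℝ) < goldPhi^2).ne',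
    Real.rpow_one] at H2
  have he : goldPhi⁻¹ * goldPhi ^ 2 = goldPhi := by
    rw [sq, ← mul_assoc, inv_mul_cancel₀ phi_ne_zero, one_mul]
  rw [he, Real.mul_rpow phi_pos.le hr1.le] at H2
  have hb : goldBeta = goldPhi ^ (goldPhi : ℝ) * goldPhi ^ 2 := by
    rw [goldBeta, Real.rpow_add phi_pos]
    norm_num [Real.rpow_natCast]
  calc goldBeta * r * (1 - r) ^ goldPhi
      = goldPhi ^ 2 * r * (goldPhi ^ (goldPhi:ℝ) * (1 - r) ^ goldPhi) := by rw [hb]; ring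
    _ ≤ 1 := H2

lemma core2 {a b : ℝ} (ha : 0 < a) (hb : 0 < b) :
    goldBeta * a / (a + b) ≤ ((a + b) / b) ^ goldPhi := by
  have hab : (0:ℝ) < a + b := by linarith
  have h0 : 0 < a / (a + b) := by positivity
  have h1 : a / (a + b) < 1 := by rw [div_lt_one hab]; linarith
  have hk := key_ineq h0 h1
  have h2 : (1 : ℝ) - a / (a + b) = b / (a + b) := by field_simp; ring
  rw [h2] at hk
  have hp : (0:ℝ) < (b / (a + b)) ^ goldPhi := Real.rpow_pos_of_pos (by positivity) _
  have h3 : ((a + b) / b) ^ goldPhi = 1 / (b / (a + b)) ^ goldPhi := by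
    rw [one_div, ← Real.inv_rpow (by positivity), inv_div]
  rw [h3, le_div_iff₀ hp, mul_div_assoc]
  exact hk

lemma core1 {a b : ℝ} (hb : 0 < b) (hba : b ≤ a) :
    goldBeta * b / (a + b) ≤ ((a + b) / b) ^ goldPhi := by
  have ha : 0 < a := lt_of_lt_of_le hb hba
  refine le_trans ?_ (core2 ha hb)
  have h : goldBeta * b ≤ goldBeta * a := mul_le_mul_of_nonneg_left hba beta_pos.le
  exact div_le_div_of_nonneg_right h (by linarith : (0:ℝ) ≤ a + b)

end AuxGold


section AuxTree
namespace BTree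
set_option linter.unusedSectionVars false

variable {α : Type} [LinearOrder α]

lemma size_balW (x : BTree α) : size (balW x) = size x := by
  cases x with
  | nil => rfl
  | node t a u => simp only [balW]; split <;> simp [size]; omega

lemma size_mergeW (x y : BTree α) : size (mergeW x y) = size x + size y := by
  induction x, y using mergeW.induct with
  | case1 => simp [mergeW, size]
  | case2 v b w ih => simp [mergeW, size_balW, size, ih]; try omega
  | case3 t a u ih => simp [mergeW, size_balW, size, ih]; try omega
  | case4 t a u v b w hab ih => simp [mergeW, size_balW, size, if_pos hab, ih]; try omega
  | case5 t a u v b w hab ih => simp [mergeW, size_balW, size, if_neg hab, ih]; try omega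

lemma one_le_s (x : BTree α) : (1:ℝ) ≤ (s x : ℝ) := by
  have : (0:ℝ) ≤ (size x : ℝ) := Nat.cast_nonneg _
  simp only [s]; push_cast; linarith

lemma s_node (t : BTree α) (a : α) (u : BTree α) :
    (s (node t a u) : ℝ) = (s t : ℝ) + s u := by
  simp only [s, size]; push_cast; ring

lemma s_mergeW (x y : BTree α) : (s (mergeW x y) : ℝ) = (s x : ℝ) + s y - 1 := by
  simp only [s, size_mergeW]; push_cast; ring

lemma p_nonneg (t u : BTree α) : 0 ≤ p t u := le_max_right _ _

lemma one_sub_p (t u : BTree α) :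
    1 - p t u ≤ Real.logb goldBeta ((s t : ℝ) + s u) - Real.logb goldBeta (s u) := by
  have h1 : (1:ℝ) ≤ (s u:ℝ) := one_le_s u
  have h2 : (1:ℝ) ≤ (s t:ℝ) := one_le_s t
  have hb0 := beta_pos
  have hlog : Real.logb goldBeta (goldBeta * (s u : ℝ) / ((s t : ℝ) + (s u : ℝ)))
      = 1 + Real.logb goldBeta (s u) - Real.logb goldBeta ((s t:ℝ) + s u) := by
    rw [Real.logb_div (by positivity) (by positivity),
      Real.logb_mul (by positivity) (by positivity), Real.logb_self_eq_one one_lt_beta]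
  have hle := le_max_left
    (Real.logb goldBeta (goldBeta * (s u : ℝ) / ((s t : ℝ) + (s u : ℝ)))) (0:ℝ)
  unfold p
  linarith [hle]

lemma Phi_balW_le (t : BTree α) (a : α) (z : BTree α) :
    Phi (balW (node t a z)) ≤ Phi t + Phi z +
      goldPhi * (Real.logb goldBeta ((s t : ℝ) + s z) - Real.logb goldBeta (s z)) := by
  have h1 : (1:ℝ) ≤ (s t:ℝ) := one_le_s t
  have h2 : (1:ℝ) ≤ (s z:ℝ) := one_le_s z
  have hφ := phi_pos
  have hb0 := beta_pos
  have hRHS0 : 0 ≤ Real.logb goldBeta ((s t:ℝ) + s z) - Real.logb goldBeta (s z) :=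
    sub_nonneg.mpr (logb_mono (by linarith) (by linarith))
  simp only [balW]
  split_ifs with h
  · -- size z < size t : result is node t a z, bound p t z
    simp only [Phi]
    have hzt : (s z : ℝ) ≤ s t := by
      have : s z ≤ s t := by simp only [s]; omega
      exact_mod_cast this
    have hc := core1 (a := (s t:ℝ)) (b := (s z:ℝ)) (by linarith) hzt
    have hlb := logb_mono (by positivity) hc
    rw [Real.logb_rpow_eq_mul_logb_of_pos (by positivity)] at hlb
    have hpz : p t z ≤ goldPhi * (Real.logb goldBeta ((s t:ℝ) + s z)
        - Real.logb goldBeta (s z)) := by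
      apply max_le _ (mul_nonneg hφ.le hRHS0)
      calc Real.logb goldBeta (goldBeta * (s z : ℝ) / ((s t : ℝ) + (s z : ℝ)))
          ≤ goldPhi * Real.logb goldBeta (((s t:ℝ) + s z) / s z) := hlb
        _ = goldPhi * (Real.logb goldBeta ((s t:ℝ) + s z) - Real.logb goldBeta (s z)) := by
            rw [Real.logb_div (by positivity) (by positivity)]
    linarith
  · -- result is node z a t, bound p z t
    simp only [Phi]
    have hc := core2 (a := (s t:ℝ)) (b := (s z:ℝ)) (by linarith) (by linarith)
    have hlb := logb_mono (by positivity) hc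
    rw [Real.logb_rpow_eq_mul_logb_of_pos (by positivity)] at hlb
    have hpz : p z t ≤ goldPhi * (Real.logb goldBeta ((s t:ℝ) + s z)
        - Real.logb goldBeta (s z)) := by
      apply max_le _ (mul_nonneg hφ.le hRHS0)
      have hcomm : (s z : ℝ) + (s t : ℝ) = (s t : ℝ) + s z := by ring
      rw [hcomm]
      calc Real.logb goldBeta (goldBeta * (s t : ℝ) / ((s t : ℝ) + (s z : ℝ)))
          ≤ goldPhi * Real.logb goldBeta (((s t:ℝ) + s z) / s z) := hlb
        _ = goldPhi * (Real.logb goldBeta ((s t:ℝ) + s z) - Real.logb goldBeta (s z)) := by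
            rw [Real.logb_div (by positivity) (by positivity)]
    linarith

end BTree
end AuxTree


section Main
namespace BTree
set_option linter.unusedSectionVars false
set_option maxHeartbeats 1000000

variable {α : Type} [LinearOrder α]

lemma s_nil_real : ((s (nil : BTree α)) : ℝ) = 1 := by simp [s, size]

lemma main_ineq (x y : BTree α) :
    (cost x y : ℝ) + Phi (mergeW x y) ≤ Phi x + Phi y + Real.logb goldBeta (s x)
      + Real.logb goldBeta (s y) + goldPhi * Real.logb goldBeta ((s x : ℝ) + s y - 1) := by
  induction x, y using mergeW.induct with
  | case1 =>
      have h1 : ((s (nil : BTree α)) : ℝ) = 1 := s_nil_real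
      simp only [mergeW, cost, Phi, h1]
      norm_num
  | case2 v b w ih =>
      have hbal := Phi_balW_le v b (mergeW nil w)
      have hp := one_sub_p v w
      have hM : (s (mergeW (nil : BTree α) w) : ℝ) = (s w : ℝ) := by
        rw [s_mergeW, s_nil_real]; ring
      have hy : (s (node v b w) : ℝ) = (s v : ℝ) + s w := s_node v b w
      rw [hM, mul_sub] at hbal
      rw [s_nil_real] at ih ⊢
      rw [show (1 : ℝ) + (s w : ℝ) - 1 = (s w : ℝ) by ring] at ih
      rw [Real.logb_one] at ih ⊢
      rw [hy, show (1 : ℝ) + ((s v : ℝ) + s w) - 1 = (s v : ℝ) + s w by ring]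
      simp only [mergeW, cost, Phi]
      push_cast
      simp only [Phi] at ih
      linarith [ih, hbal, hp]
  | case3 t a u ih =>
      have hbal := Phi_balW_le t a (mergeW u nil)
      have hp := one_sub_p t u
      have hM : (s (mergeW u (nil : BTree α)) : ℝ) = (s u : ℝ) := by
        rw [s_mergeW, s_nil_real]; ring
      have hx : (s (node t a u) : ℝ) = (s t : ℝ) + s u := s_node t a u
      rw [hM, mul_sub] at hbal
      rw [s_nil_real] at ih ⊢
      rw [show (s u : ℝ) + 1 - 1 = (s u : ℝ) by ring] at ih
      rw [Real.logb_one] at ih ⊢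
      rw [hx, show (s t : ℝ) + (s u : ℝ) + 1 - 1 = (s t : ℝ) + s u by ring]
      simp only [mergeW, cost, Phi]
      push_cast
      simp only [Phi] at ih
      linarith [ih, hbal, hp]
  | case4 t a u v b w hab ih =>
      have hbal := Phi_balW_le t a (mergeW u (node v b w))
      have hp := one_sub_p t u
      have hM : (s (mergeW u (node v b w)) : ℝ) = (s u : ℝ) + s (node v b w) - 1 :=
        s_mergeW u (node v b w)
      have hx : (s (node t a u) : ℝ) = (s t : ℝ) + s u := s_node t a u
      rw [hM, mul_sub] at hbal
      rw [show (s t : ℝ) + ((s u : ℝ) + (s (node v b w) : ℝ) - 1)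
          = (s (node t a u) : ℝ) + (s (node v b w) : ℝ) - 1 by rw [hx]; ring] at hbal
      rw [← hx] at hp
      simp only [mergeW, cost, if_pos hab, Phi]
      push_cast
      simp only [Phi] at ih
      linarith [ih, hbal, hp]
  | case5 t a u v b w hab ih =>
      have hbal := Phi_balW_le v b (mergeW (node t a u) w)
      have hp := one_sub_p v w
      have hM : (s (mergeW (node t a u) w) : ℝ) = (s (node t a u) : ℝ) + s w - 1 :=
        s_mergeW (node t a u) w
      have hy : (s (node v b w) : ℝ) = (s v : ℝ) + s w := s_node v b w
      rw [hM, mul_sub] at hbal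
      rw [show (s v : ℝ) + ((s (node t a u) : ℝ) + (s w : ℝ) - 1)
          = (s (node t a u) : ℝ) + (s (node v b w) : ℝ) - 1 by rw [hy]; ring] at hbal
      rw [← hy] at hp
      simp only [mergeW, cost, if_neg hab, Phi]
      push_cast
      simp only [Phi] at ih
      linarith [ih, hbal, hp]

lemma main_phi (x y : BTree α) :
    (cost x y : ℝ) + Phi (mergeW x y) - Phi x - Phi y
      ≤ Real.logb goldPhi ((s x : ℝ) + (s y : ℝ)) := by
  have h := main_ineq x y
  have hx1 : (1:ℝ) ≤ (s x : ℝ) := one_le_s x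
  have hy1 : (1:ℝ) ≤ (s y : ℝ) := one_le_s y
  have l1 : Real.logb goldBeta (s x) ≤ Real.logb goldBeta ((s x : ℝ) + s y) :=
    logb_mono (by linarith) (by linarith)
  have l2 : Real.logb goldBeta (s y) ≤ Real.logb goldBeta ((s x : ℝ) + s y) :=
    logb_mono (by linarith) (by linarith)
  have l3 : Real.logb goldBeta ((s x : ℝ) + s y - 1) ≤ Real.logb goldBeta ((s x : ℝ) + s y) :=
    logb_mono (by linarith) (by linarith)
  have l3' := mul_le_mul_of_nonneg_left l3 phi_pos.le
  rw [logb_phi_eq]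
  have hring : (goldPhi + 2) * Real.logb goldBeta ((s x : ℝ) + s y)
      = goldPhi * Real.logb goldBeta ((s x : ℝ) + s y)
        + 2 * Real.logb goldBeta ((s x : ℝ) + s y) := by ring
  rw [hring]
  linarith [h, l1, l2, l3']

end BTree
end Main



/- For all weight-biased leftist heaps x and y the amortized cost of union is at most
log_φ(s(x)+s(y)), and for every nonempty weight-biased leftist heap x = ⟨t,a,u⟩ the
amortized cost of delete-min is at most log_φ s(x). -/
open BTree in
theorem amortized_union_deleteMin_weightBiased (α : Type) [LinearOrder α] :
    (∀ x y : BTree α, IsHeap x → WeightLeftist x → IsHeap y → WeightLeftist y →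
      (cost x y : ℝ) + Phi (mergeW x y) - Phi x - Phi y
        ≤ Real.logb goldPhi ((s x : ℝ) + (s y : ℝ))) ∧
    (∀ (t : BTree α) (a : α) (u : BTree α),
      IsHeap (node t a u) → WeightLeftist (node t a u) →
      (cost t u : ℝ) + Phi (mergeW t u) - Phi (node t a u)
        ≤ Real.logb goldPhi (s (node t a u))) := by
  constructor
  · intro x y _ _ _ _
    exact main_phi x y
  · intro t a u _ _
    have h := main_phi t u
    have hpn := p_nonneg t u
    have hs : (s (node t a u) : ℝ) = (s t : ℝ) + s u := s_node t a u
    rw [hs]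
    simp only [Phi]
    linarith [h, hpn]
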